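/- arXiv:1606.04718 — 3 statements merged into one kernel-verified Lean document; each statement's English description precedes it below -/
import Mathlib

section
/- In a connected undirected graph, a vertex v is colored black at some stage of BFS from a root s (i.e., v has been fully processed) if and only if there exists a path from s to v all of whose vertices are white or black at that stage, i.e., a path avoiding all grey vertices (vertices currently in the queue). -/
/-- A state of breadth-first search: the FIFO queue (the grey vertices) and the set of
discovered vertices.  A vertex is white if undiscovered, grey if in the queue, and
black if discovered and no longer in the queue (fully processed). -/
structure BFSState (V : Type*) where
  queue : List V
  discovered : Finset V

/-- One step of BFS: remove the first vertex `u` of the queue and append all of its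
currently undiscovered neighbors to the queue, marking them discovered. -/
def BFSStep {V : Type*} [DecidableEq V] (G : SimpleGraph V) (s t : BFSState V) : Prop :=
  ∃ (u : V) (rest new : List V),
    s.queue = u :: rest ∧ new.Nodup ∧
    (∀ v, v ∈ new ↔ G.Adj u v ∧ v ∉ s.discovered) ∧
    t.queue = rest ++ new ∧ t.discovered = s.discovered ∪ new.toFinset

/-- The BFS invariant. -/
def BFSInv {V : Type*} [DecidableEq V] (G : SimpleGraph V) (s : V) (st : BFSState V) : Prop :=
  s ∈ st.discovered ∧
  st.queue.Nodup ∧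
  (∀ x ∈ st.queue, x ∈ st.discovered) ∧
  (∀ v ∈ st.discovered, ∃ p : G.Walk s v,
      ∀ x ∈ p.support, x ≠ v → (x ∈ st.discovered ∧ x ∉ st.queue)) ∧
  (∀ x y, G.Adj x y → x ∈ st.discovered → x ∉ st.queue → y ∈ st.discovered)

lemma bfs_inv_step {V : Type*} [DecidableEq V] (G : SimpleGraph V) (s : V)
    {a b : BFSState V} (hI : BFSInv G s a) (hs : BFSStep G a b) : BFSInv G s b := by
  obtain ⟨hsd, hnd, hqd, hI1, hI2⟩ := hI
  obtain ⟨u, rest, new, hq, hnew_nd, hnew, hq', hd'⟩ := hs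
  have hrest_nd : rest.Nodup := (hq ▸ hnd).of_cons
  have hu_rest : u ∉ rest := (List.nodup_cons.mp (hq ▸ hnd)).1
  have hud : u ∈ a.discovered := hqd u (by rw [hq]; exact List.mem_cons_self)
  have hnew_fresh : ∀ x ∈ new, x ∉ a.discovered := fun x hx => ((hnew x).mp hx).2
  -- black vertices stay black
  have hblack : ∀ x, x ∈ a.discovered → x ∉ a.queue → x ∈ b.discovered ∧ x ∉ b.queue := by
    intro x hx hxq
    refine ⟨by rw [hd']; exact Finset.mem_union_left _ hx, ?_⟩
    rw [hq']; intro hmem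
    rcases List.mem_append.mp hmem with h1 | h2
    · exact hxq (by rw [hq]; exact List.mem_cons_of_mem _ h1)
    · exact hnew_fresh x h2 hx
  have hu_black : u ∈ b.discovered ∧ u ∉ b.queue := by
    refine ⟨by rw [hd']; exact Finset.mem_union_left _ hud, ?_⟩
    rw [hq']; intro hmem
    rcases List.mem_append.mp hmem with h1 | h2
    · exact hu_rest h1
    · exact hnew_fresh u h2 hud
  refine ⟨by rw [hd']; exact Finset.mem_union_left _ hsd, ?_, ?_, ?_, ?_⟩
  · rw [hq']
    refine List.Nodup.append hrest_nd hnew_nd ?_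
    intro x hx hx'
    exact hnew_fresh x hx' (hqd x (by rw [hq]; exact List.mem_cons_of_mem _ hx))
  · intro x hx
    rw [hq'] at hx
    rw [hd']
    rcases List.mem_append.mp hx with h1 | h2
    · exact Finset.mem_union_left _ (hqd x (by rw [hq]; exact List.mem_cons_of_mem _ h1))
    · exact Finset.mem_union_right _ (List.mem_toFinset.mpr h2)
  · intro w hw
    rw [hd'] at hw
    rcases Finset.mem_union.mp hw with hw1 | hw2
    · obtain ⟨p, hp⟩ := hI1 w hw1
      exact ⟨p, fun x hx hxw => hblack x (hp x hx hxw).1 (hp x hx hxw).2⟩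
    · rw [List.mem_toFinset] at hw2
      obtain ⟨hadj, _⟩ := (hnew w).mp hw2
      obtain ⟨p, hp⟩ := hI1 u hud
      refine ⟨p.concat hadj, ?_⟩
      intro x hx hxw
      rw [SimpleGraph.Walk.support_concat, List.mem_append] at hx
      rcases hx with hx | hx
      · by_cases hxu : x = u
        · exact hxu ▸ hu_black
        · exact hblack x (hp x hx hxu).1 (hp x hx hxu).2
      · simp at hx; exact absurd hx hxw
  · intro x y hadj hx hxq
    rw [hd'] at hx ⊢
    rcases Finset.mem_union.mp hx with hx1 | hx2
    · by_cases hxq0 : x ∈ a.queue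
      · -- then x must be u
        rw [hq] at hxq0
        rcases List.mem_cons.mp hxq0 with hxu | hxr
        · subst hxu
          by_cases hyd : y ∈ a.discovered
          · exact Finset.mem_union_left _ hyd
          · exact Finset.mem_union_right _ (List.mem_toFinset.mpr ((hnew y).mpr ⟨hadj, hyd⟩))
        · exact absurd (by rw [hq']; exact List.mem_append_left _ hxr) hxq
      · exact Finset.mem_union_left _ (hI2 x y hadj hx1 hxq0)
    · rw [List.mem_toFinset] at hx2
      exact absurd (by rw [hq']; exact List.mem_append_right _ hx2) hxq

lemma bfs_walk_discovered {V : Type*} [DecidableEq V] (G : SimpleGraph V) (st : BFSState V)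
    (hI2 : ∀ x y, G.Adj x y → x ∈ st.discovered → x ∉ st.queue → y ∈ st.discovered) :
    ∀ {a w : V} (p : G.Walk a w), a ∈ st.discovered →
      (∀ u ∈ p.support, u ∉ st.queue) → w ∈ st.discovered := by
  intro a w p
  induction p with
  | nil => exact fun ha _ => ha
  | @cons a b c hab q ih =>
    intro ha hq
    exact ih (hI2 a b hab ha (hq a (by simp))) (fun u hu => hq u (by simp [hu]))

/-- At any stage of a BFS from `s` on a connected graph, a vertex `v` is black
(discovered and not in the queue) if and only if there is a path (walk) from `s` to `v`
all of whose vertices avoid the queue, i.e. are white or black at that stage. -/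
theorem bfs_black_iff_path_avoiding_grey {V : Type*} [Fintype V] [DecidableEq V]
    (G : SimpleGraph V) (hG : G.Connected) (s : V) (st : BFSState V)
    (h : Relation.ReflTransGen (BFSStep G) ⟨[s], {s}⟩ st) (v : V) :
    (v ∈ st.discovered ∧ v ∉ st.queue) ↔
      ∃ p : G.Walk s v, ∀ u ∈ p.support, u ∉ st.queue := by
  have hInv : BFSInv G s st := by
    induction h with
    | refl =>
      refine ⟨Finset.mem_singleton_self s, List.nodup_singleton s, ?_, ?_, ?_⟩
      · intro x hx; simp at hx; simp [hx]
      · intro w hw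
        simp only [Finset.mem_singleton] at hw
        subst hw
        exact ⟨SimpleGraph.Walk.nil, by intro x hx hxw; simp at hx; exact absurd hx hxw⟩
      · intro x y _ hx hxq
        simp only [Finset.mem_singleton] at hx
        exact absurd (by simp [hx]) hxq
    | tail _ hstep ih => exact bfs_inv_step G s ih hstep
  obtain ⟨hsd, _, _, hI1, hI2⟩ := hInv
  constructor
  · rintro ⟨hvd, hvq⟩
    obtain ⟨p, hp⟩ := hI1 v hvd
    refine ⟨p, fun u hu => ?_⟩
    by_cases huv : u = v
    · exact huv ▸ hvq
    · exact (hp u hu huv).2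
  · rintro ⟨p, hp⟩
    exact ⟨bfs_walk_discovered G st hI2 p hsd hp, hp v p.end_mem_support⟩
end

section
/- Let D be a chain decomposition of a connected undirected graph G, with first chain D1. Then G is 2-vertex-connected (biconnected) if and only if the minimum degree of G is at least 2 and D1 is the only chain in D that is a cycle. -/
variable {V : Type*} [Fintype V] [DecidableEq V]

/-- Follow tree edges (parent pointers) towards the root, starting at `w`, stopping at
the first vertex that is already visited, or at the root.  The first argument is fuel. -/
def towardRoot (parent : V → V) (root : V) (visited : Finset V) : ℕ → V → List V
  | 0, w => [w]
  | n + 1, w =>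
      if w ∈ visited ∨ w = root then [w]
      else w :: towardRoot parent root visited n (parent w)

/-- Schmidt's chain construction: process the back edges in order; the back edge `(v, w)`
(oriented away from the root, so `v` is an ancestor of `w`) generates the chain starting
at `v`, following the back edge to `w` and then tree edges towards the root, stopping at
the first already-visited vertex (or the root); all vertices encountered are marked
visited. -/
def runChains (parent : V → V) (root : V) : List (V × V) → Finset V → List (List V)
  | [], _ => []
  | (v, w) :: rest, visited =>
      let c := v :: towardRoot parent root (insert v visited) (Fintype.card V) w
      c :: runChains parent root rest (visited ∪ c.toFinset)

/-- A DFS tree of a graph `G`, rooted at `root`, given by parent pointers, together with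
discovery times `dfi` and the list of back edges `(v, w)` (with the ancestor `v` first,
i.e. oriented away from the root), listed in increasing order of the discovery time of
their origin, as in Schmidt's chain decomposition. -/
structure SchmidtDFS (G : SimpleGraph V) where
  root : V
  parent : V → V
  dfi : V → ℕ
  backEdges : List (V × V)
  parent_root : parent root = root
  parent_adj : ∀ v, v ≠ root → G.Adj v (parent v)
  reaches_root : ∀ v, ∃ k, parent^[k] v = root
  dfi_inj : Function.Injective dfi
  dfi_parent : ∀ v, v ≠ root → dfi (parent v) < dfi v
  /-- every back edge is an edge of `G` joining a vertex `w` to a proper ancestor `v`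
  which is not its parent (so it is not a tree edge) -/
  backEdges_spec : ∀ p ∈ backEdges, G.Adj p.1 p.2 ∧ p.1 ≠ parent p.2 ∧
      ∃ k, 2 ≤ k ∧ parent^[k] p.2 = p.1
  /-- every non-tree edge of `G` appears among the back edges -/
  backEdges_complete : ∀ u v, G.Adj u v → u ≠ parent v → v ≠ parent u →
      (u, v) ∈ backEdges ∨ (v, u) ∈ backEdges
  backEdges_nodup : (backEdges.map fun p => s(p.1, p.2)).Nodup
  /-- back edges are processed in increasing order of the discovery time of their origin -/
  backEdges_sorted : backEdges.Pairwise fun p q => dfi p.1 ≤ dfi q.1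

/-- The chain decomposition determined by a DFS structure: initially no vertex is
visited, and back edges are processed in order. -/
def SchmidtDFS.chains {G : SimpleGraph V} (D : SchmidtDFS G) : List (List V) :=
  runChains D.parent D.root D.backEdges ∅

/-- The edges of a chain (given as the list of its vertices in order). -/
def chainEdges (c : List V) : List (Sym2 V) :=
  List.zipWith (fun a b => s(a, b)) c c.tail

/-- A chain is a cycle if it has at least two vertices and ends where it starts. -/
def IsCycleChain (c : List V) : Prop := 2 ≤ c.length ∧ c.head? = c.getLast?

section Basic

set_option linter.unusedSectionVars false
variable {p : V → V} {r : V}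

lemma iter_fix (hpr : p r = r) : ∀ k, p^[k] r = r := by
  intro k
  induction k with
  | zero => rfl
  | succ n ih => rw [Function.iterate_succ_apply', ih, hpr]

variable {dfi : V → ℕ}

lemma dfi_iter_le (hpr : p r = r) (hd : ∀ v, v ≠ r → dfi (p v) < dfi v) :
    ∀ k v, dfi (p^[k] v) ≤ dfi v := by
  intro k
  induction k with
  | zero => intro v; rfl
  | succ n ih =>
      intro v
      rw [Function.iterate_succ_apply']
      rcases eq_or_ne (p^[n] v) r with h | h
      · rw [h, hpr, ← h]; exact ih v
      · exact le_trans (le_of_lt (hd _ h)) (ih v)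

lemma iter_eq_root (hpr : p r = r) (hreach : ∀ v, ∃ k, p^[k] v = r) :
    ∀ k v, 0 < k → p^[k] v = v → v = r := by
  intro k v hk hkv
  obtain ⟨K, hK⟩ := hreach v
  have hmul : ∀ t, p^[t * k] v = v := by
    intro t
    induction t with
    | zero => simp
    | succ n ih => rw [Nat.succ_mul, Function.iterate_add_apply, hkv, ih]
  have h1 : p^[K * k] v = v := hmul K
  have h2 : p^[K * k] v = r := by
    have : K * k = (K * k - K) + K := by
      have : K ≤ K * k := Nat.le_mul_of_pos_right K hk
      omega
    rw [this, Function.iterate_add_apply, hK, iter_fix hpr]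
  rw [h2] at h1; exact h1.symm

lemma dfi_iter_lt (hpr : p r = r) (hinj : Function.Injective dfi)
    (hd : ∀ v, v ≠ r → dfi (p v) < dfi v) :
    ∀ k v, p^[k] v ≠ v → dfi (p^[k] v) < dfi v := by
  intro k v hne
  rcases lt_or_eq_of_le (dfi_iter_le hpr hd k v) with h | h
  · exact h
  · exact absurd (hinj h) hne

/-- characterization of towardRoot -/
lemma towardRoot_eq (vis : Finset V) :
    ∀ k w n, (p^[k] w ∈ vis ∨ p^[k] w = r) → (∀ j < k, ¬ (p^[j] w ∈ vis ∨ p^[j] w = r)) →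
    k ≤ n →
    towardRoot p r vis n w = (List.range (k+1)).map (fun t => p^[t] w) := by
  intro k
  induction k with
  | zero =>
      intro w n htrig _ _
      simp only [Function.iterate_zero_apply] at htrig
      cases n with
      | zero => simp [towardRoot, List.range_succ]
      | succ n => simp [towardRoot, htrig, List.range_succ]
  | succ k ih =>
      intro w n htrig hmin hn
      obtain ⟨n, rfl⟩ : ∃ m, n = m + 1 := ⟨n - 1, by omega⟩
      have h0 : ¬ (w ∈ vis ∨ w = r) := by
        have := hmin 0 (Nat.succ_pos k); simpa using this
      rw [towardRoot, if_neg h0]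
      have ihe := ih (p w) n
        (by rw [← Function.iterate_succ_apply]; exact htrig)
        (by intro j hj; rw [← Function.iterate_succ_apply]; exact hmin (j+1) (by omega))
        (by omega)
      rw [ihe]
      conv_rhs => rw [List.range_succ_eq_map, List.map_cons, List.map_map]
      rfl

lemma exists_min_trig (hpr : p r = r) (hreach : ∀ v, ∃ k, p^[k] v = r)
    (vis : Finset V) (w : V) :
    ∃ k, k + 1 ≤ Fintype.card V ∧ (p^[k] w ∈ vis ∨ p^[k] w = r) ∧
      ∀ j < k, ¬ (p^[j] w ∈ vis ∨ p^[j] w = r) := by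
  classical
  have hex : ∃ k, (p^[k] w ∈ vis ∨ p^[k] w = r) := by
    obtain ⟨K, hK⟩ := hreach w; exact ⟨K, Or.inr hK⟩
  set k := Nat.find hex with hkdef
  have hspec := Nat.find_spec hex
  have hmin : ∀ j < k, ¬ (p^[j] w ∈ vis ∨ p^[j] w = r) := fun j hj => Nat.find_min hex hj
  refine ⟨k, ?_, hspec, hmin⟩
  have hinjOn : Set.InjOn (fun t => p^[t] w) ↑(Finset.range (k+1)) := by
    have key : ∀ t t', t < t' → t' ≤ k → p^[t] w ≠ p^[t'] w := by
      intro t t' htt' ht'k heq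
      have : p^[t' - t] (p^[t] w) = p^[t] w := by
        rw [← Function.iterate_add_apply]
        have : t' - t + t = t' := by omega
        rw [this, heq]
      have hr : p^[t] w = r := iter_eq_root hpr hreach (t' - t) _ (by omega) this
      exact hmin t (by omega) (Or.inr hr)
    intro t ht t' ht' heq
    simp only [Finset.coe_range, Set.mem_Iio] at ht ht'
    rcases lt_trichotomy t t' with h | h | h
    · exact absurd heq (key t t' h (by omega))
    · exact h
    · exact absurd heq.symm (key t' t h (by omega))
  have := Finset.card_le_card_of_injOn (fun t => p^[t] w) (fun t _ => Finset.mem_univ _) hinjOn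
  simpa using this

end Basic

section ChainsInfra

set_option linter.unusedSectionVars false

variable {G : SimpleGraph V}

/-- reachability avoiding a vertex -/
def Reach (G : SimpleGraph V) (vr a b : V) : Prop :=
  ∀ (ha : a ≠ vr) (hb : b ≠ vr),
    (SimpleGraph.induce {u : V | u ≠ vr} G).Reachable ⟨a, ha⟩ ⟨b, hb⟩

lemma reach_refl (vr a : V) : Reach G vr a a := fun _ _ => SimpleGraph.Reachable.refl _

lemma reach_symm {vr a b : V} (h : Reach G vr a b) : Reach G vr b a :=
  fun hb ha => (h ha hb).symm

lemma reach_trans {vr a b c : V} (h : Reach G vr a b) (h' : Reach G vr b c)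
    (hb : b ≠ vr) : Reach G vr a c :=
  fun ha hc => (h ha hb).trans (h' hb hc)

lemma reach_adj {vr a b : V} (hadj : G.Adj a b) : Reach G vr a b := by
  intro ha hb
  exact SimpleGraph.Adj.reachable (by simpa using hadj :
    (SimpleGraph.induce {u : V | u ≠ vr} G).Adj ⟨a, ha⟩ ⟨b, hb⟩)

lemma reach_seg {n : ℕ} (vr : V) (x : ℕ → V)
    (hadj : ∀ i, i + 1 ≤ n → G.Adj (x i) (x (i+1))) :
    ∀ t t', t ≤ t' → t' ≤ n → (∀ s, t ≤ s → s ≤ t' → x s ≠ vr) →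
      Reach G vr (x t) (x t') := by
  intro t t' htt'
  induction t', htt' using Nat.le_induction with
  | base => intro _ _; exact reach_refl vr (x t)
  | succ t' ht' ih =>
      intro hn havoid
      refine reach_trans (ih (by omega) (fun s hs hs' => havoid s hs (by omega))) ?_ ?_
      · exact reach_adj (hadj t' (by omega))
      · exact havoid t' ht' (by omega)

end ChainsInfra

def visList (p : V → V) (r : V) : List (V × V) → Finset V → Finset V
  | [], vis => vis
  | (v, w) :: rest, vis =>
      visList p r rest
        (vis ∪ (v :: towardRoot p r (insert v vis) (Fintype.card V) w).toFinset)

lemma runChains_cons (p : V → V) (r : V) (v w : V) (rest : List (V × V)) (vis : Finset V) :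
    runChains p r ((v, w) :: rest) vis =
      (v :: towardRoot p r (insert v vis) (Fintype.card V) w) ::
        runChains p r rest
          (vis ∪ (v :: towardRoot p r (insert v vis) (Fintype.card V) w).toFinset) := rfl

section WithD

set_option linter.unusedSectionVars false

variable {G : SimpleGraph V} (D : SchmidtDFS G)

lemma chain_struct (vis : Finset V) (v w : V) (k : ℕ) (hk2 : 1 ≤ k)
    (hkv : D.parent^[k] w = v) :
    ∃ m, m ≤ k ∧
      towardRoot D.parent D.root (insert v vis) (Fintype.card V) w
        = (List.range (m+1)).map (fun t => D.parent^[t] w) ∧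
      D.parent^[m] w ∈ insert v vis ∧
      (∀ j < m, ¬ (D.parent^[j] w ∈ insert v vis ∨ D.parent^[j] w = D.root)) := by
  obtain ⟨m, hcard, htrig, hmin⟩ := exists_min_trig D.parent_root D.reaches_root
    (insert v vis) w
  have hmk : m ≤ k := by
    by_contra h
    exact hmin k (by omega) (Or.inl (by rw [hkv]; exact Finset.mem_insert_self v vis))
  have hstop : D.parent^[m] w ∈ insert v vis := by
    rcases htrig with h | h
    · exact h
    · have : v = D.root := by
        rw [← hkv]
        have : k = (k - m) + m := by omega
        rw [this, Function.iterate_add_apply, h, iter_fix D.parent_root]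
      rw [h, ← this]; exact Finset.mem_insert_self v vis
  refine ⟨m, hmk, ?_, hstop, hmin⟩
  exact towardRoot_eq _ m w _ htrig hmin (by omega)

lemma path_inj {w : V} {m : ℕ} (hne : ∀ j < m, D.parent^[j] w ≠ D.root) :
    ∀ t t', t ≤ t' → t' ≤ m → D.parent^[t] w = D.parent^[t'] w → t = t' := by
  intro t t' htt' ht'm heq
  by_contra h
  have htlt : t < t' := by omega
  have : D.parent^[t' - t] (D.parent^[t] w) = D.parent^[t] w := by
    rw [← Function.iterate_add_apply]
    have : t' - t + t = t' := by omega
    rw [this, heq]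
  have hr : D.parent^[t] w = D.root :=
    iter_eq_root D.parent_root D.reaches_root (t' - t) _ (by omega) this
  exact hne t (by omega) hr

lemma cycle_iff (v w : V) (m : ℕ) :
    IsCycleChain (v :: (List.range (m+1)).map (fun t => D.parent^[t] w)) ↔
      D.parent^[m] w = v := by
  have hlast : (v :: (List.range (m+1)).map (fun t => D.parent^[t] w)).getLast?
      = some (D.parent^[m] w) := by
    rw [List.range_succ, List.map_append, List.map_singleton,
      show v :: ((List.range m).map (fun t => D.parent^[t] w) ++ [D.parent^[m] w])
        = (v :: (List.range m).map (fun t => D.parent^[t] w)) ++ [D.parent^[m] w] from rfl]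
    exact List.getLast?_concat
  constructor
  · rintro ⟨-, h2⟩
    rw [hlast] at h2
    simpa using h2.symm
  · intro h
    refine ⟨by simp, ?_⟩
    rw [hlast, h]
    simp

lemma chain_mem (v w : V) (m : ℕ) (a : V) :
    a ∈ (v :: (List.range (m+1)).map (fun t => D.parent^[t] w)) ↔
      a = v ∨ ∃ t, t ≤ m ∧ a = D.parent^[t] w := by
  simp only [List.mem_cons, List.mem_map, List.mem_range]
  constructor
  · rintro (h | ⟨t, ht, rfl⟩)
    · exact Or.inl h
    · exact Or.inr ⟨t, by omega, rfl⟩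
  · rintro (h | ⟨t, ht, rfl⟩)
    · exact Or.inl h
    · exact Or.inr ⟨t, by omega, rfl⟩

end WithD

section Forward

set_option linter.unusedSectionVars false

variable {G : SimpleGraph V} (D : SchmidtDFS G)

def trig (vis : Finset V) (v a : V) : Prop := a ∈ insert v vis ∨ a = D.root

def Sset (vis : Finset V) (v a : V) : Prop :=
  ∃ s, 0 < s ∧ D.parent^[s] a = v ∧ ∀ j < s, ¬ trig D vis v (D.parent^[j] a)

lemma not_trig_self {vis : Finset V} {v a : V} (h : Sset D vis v a) :
    ¬ trig D vis v a := by
  obtain ⟨s, hs, -, hmin⟩ := h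
  simpa using hmin 0 hs

lemma helperW (vis : Finset V) (v : V)
    (hA : ∀ a ∈ vis, D.parent a ∈ vis ∨ D.dfi a ≤ D.dfi v) :
    ∀ t z, z ∈ vis → ¬ trig D vis v (D.parent^[t] z) →
      (∃ s, D.parent^[s] (D.parent^[t] z) = v) → False := by
  intro t
  induction t with
  | zero =>
      intro z hz htrig _
      exact htrig (Or.inl (Finset.mem_insert_of_mem hz))
  | succ t ih =>
      intro z hz htrig hex
      rcases hA z hz with hpz | hdfi
      · refine ih (D.parent z) hpz ?_ ?_
        · rwa [← Function.iterate_succ_apply]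
        · obtain ⟨s, hs⟩ := hex
          exact ⟨s, by rwa [← Function.iterate_succ_apply]⟩
      · obtain ⟨s, hs⟩ := hex
        rw [← Function.iterate_add_apply] at hs
        by_cases hzv : D.parent^[s + (t+1)] z = z
        · have hvr : z = D.root :=
            iter_eq_root D.parent_root D.reaches_root (s + (t+1)) z (by omega) hzv
          refine htrig (Or.inr ?_)
          rw [hvr, iter_fix D.parent_root]
        · have := dfi_iter_lt D.parent_root D.dfi_inj D.dfi_parent (s + (t+1)) z hzv
          rw [hs] at this
          omega

lemma barrier (vis : Finset V) (v : V) (es : List (V × V))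
    (hsub : ∀ e ∈ es, e ∈ D.backEdges)
    (hsortv : ∀ e ∈ es, D.dfi v ≤ D.dfi e.1)
    (hA : ∀ a ∈ vis, D.parent a ∈ vis ∨ D.dfi a ≤ D.dfi v)
    (hB : ∀ e ∈ D.backEdges, e.1 = v ∨ e ∈ es ∨ (e.1 ∈ vis ∧ e.2 ∈ vis))
    (a b : V) (hadj : G.Adj a b) (hSb : Sset D vis v b) (hnSa : ¬ Sset D vis v a) :
    a = v := by
  classical
  obtain ⟨s, hs0, hsv, hmin⟩ := hSb
  have hbt : ¬ trig D vis v b := by simpa using hmin 0 hs0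
  by_contra hav
  by_cases h1 : a = D.parent b
  · -- tree edge, a parent of b
    rcases eq_or_lt_of_le (Nat.one_le_iff_ne_zero.mpr (Nat.pos_iff_ne_zero.mp hs0)) with h | h
    · apply hav
      rw [h1, ← Function.iterate_one D.parent, ← hsv, ← h]
    · apply hnSa
      refine ⟨s - 1, by omega, ?_, ?_⟩
      · rw [h1, ← Function.iterate_succ_apply, Nat.succ_eq_add_one]
        have : s - 1 + 1 = s := by omega
        rw [this, hsv]
      · intro j hj
        rw [h1, ← Function.iterate_succ_apply]
        exact hmin (j + 1) (by omega)
  · by_cases h2 : b = D.parent a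
    · -- tree edge, b parent of a
      by_cases hta : trig D vis v a
      · rcases hta with hta | hta
        · rcases Finset.mem_insert.mp hta with hta | hta
          · exact hav hta
          · exact helperW D vis v hA 1 a hta
              (by simpa [Function.iterate_one, ← h2] using hbt)
              ⟨s, by simp [Function.iterate_one, ← h2, hsv]⟩
        · -- a = root
          apply hbt
          rw [h2, hta, D.parent_root, ← hta]
          exact Or.inr hta
      · apply hnSa
        refine ⟨s + 1, by omega, ?_, ?_⟩
        · rw [Function.iterate_succ_apply, ← h2, hsv]
        · intro j hj
          cases j with
          | zero => simpa using hta
          | succ j =>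
              rw [Function.iterate_succ_apply, ← h2]
              exact hmin j (by omega)
    · rcases D.backEdges_complete a b hadj h1 h2 with hab | hba
      · -- (a,b) a back edge, a ancestor of b
        obtain ⟨-, -, k', hk'2, hk'ab⟩ := D.backEdges_spec _ hab
        have hk'ab : D.parent^[k'] b = a := hk'ab
        rcases lt_trichotomy k' s with h | h | h
        · apply hnSa
          refine ⟨s - k', by omega, ?_, ?_⟩
          · rw [← hk'ab, ← Function.iterate_add_apply]
            have : s - k' + k' = s := by omega
            rw [this, hsv]
          · intro j hj
            rw [← hk'ab, ← Function.iterate_add_apply]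
            exact hmin (j + k') (by omega)
        · exact hav (by rw [← hk'ab, h, hsv])
        · have hadfi : D.dfi a < D.dfi v := by
            have hva : D.parent^[k' - s] v = a := by
              rw [← hsv, ← Function.iterate_add_apply]
              have : k' - s + s = k' := by omega
              rw [this, hk'ab]
            have : D.parent^[k' - s] v ≠ v := by rw [hva]; exact hav
            have := dfi_iter_lt D.parent_root D.dfi_inj D.dfi_parent (k' - s) v this
            rwa [hva] at this
          rcases hB _ hab with h' | h' | h'
          · exact hav h'

          · have h'' : D.dfi v ≤ D.dfi a := hsortv _ h'
            omega
          · exact hbt (Or.inl (Finset.mem_insert_of_mem h'.2))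
      · -- (b,a) a back edge, b ancestor of a
        obtain ⟨-, -, k'', hk''2, hk''⟩ := D.backEdges_spec _ hba
        have hk'' : D.parent^[k''] a = b := hk''
        rcases hB _ hba with h' | h' | h'
        · have h' : b = v := h'
          exact hbt (Or.inl (by rw [h']; exact Finset.mem_insert_self _ _))
        · -- in es : dfi v ≤ dfi b; analyze path from a to b
          by_cases hall : ∀ j < k'', ¬ trig D vis v (D.parent^[j] a)
          · apply hnSa
            refine ⟨s + k'', by omega, ?_, ?_⟩
            · rw [Function.iterate_add_apply, hk'', hsv]
            · intro j hj
              by_cases hjk : j < k''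
              · exact hall j hjk
              · have : D.parent^[j] a = D.parent^[j - k''] b := by
                  rw [← hk'', ← Function.iterate_add_apply]
                  congr 1; omega
                rw [this]
                exact hmin (j - k'') (by omega)
          · push_neg at hall
            obtain ⟨j, hjk, hjt⟩ := hall
            have hbj : D.parent^[k'' - j] (D.parent^[j] a) = b := by
              rw [← Function.iterate_add_apply]
              have : k'' - j + j = k'' := by omega
              rw [this, hk'']
            rcases hjt with hy | hy
            · rcases Finset.mem_insert.mp hy with hy | hy
              · -- p^[j] a = v
                have hvb : D.parent^[k'' - j] v = b := by rw [← hy]; exact hbj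
                have hvv : D.parent^[s + (k'' - j)] v = v := by
                  rw [Function.iterate_add_apply, hvb, hsv]
                have hvr : v = D.root :=
                  iter_eq_root D.parent_root D.reaches_root _ v (by omega) hvv
                apply hbt
                rw [← hvb, hvr, iter_fix D.parent_root]
                exact Or.inr rfl
              · exact helperW D vis v hA (k'' - j) _ hy (by rwa [hbj]) ⟨s, by rw [hbj, hsv]⟩
            · apply hbt
              rw [← hbj, hy, iter_fix D.parent_root]
              exact Or.inr rfl
        · exact hbt (Or.inl (Finset.mem_insert_of_mem h'.1))

end Forward

section Forward2

set_option linter.unusedSectionVars false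

variable {G : SimpleGraph V} (D : SchmidtDFS G)

lemma walk_in_S (vis : Finset V) (v : V)
    (hbar : ∀ a b, G.Adj a b → Sset D vis v b → ¬ Sset D vis v a → a = v) :
    ∀ (x y : ↥{u : V | u ≠ v}) (wk : (SimpleGraph.induce {u : V | u ≠ v} G).Walk x y),
      Sset D vis v x.1 → Sset D vis v y.1 := by
  intro x y wk
  induction wk with
  | nil => exact id
  | cons h q ih =>
      rename_i u t z
      intro hSu
      apply ih
      have hadj : G.Adj u.1 t.1 := by simpa using h
      by_contra hnt
      exact t.2 (hbar t.1 u.1 hadj.symm hSu hnt)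

lemma head_no_cycle
    (hnocut : ∀ u : V, (SimpleGraph.induce {x : V | x ≠ u} G).Connected)
    (vis : Finset V) (v w : V) (es : List (V × V))
    (hsub : ∀ e ∈ es, e ∈ D.backEdges)
    (hsortv : ∀ e ∈ es, D.dfi v ≤ D.dfi e.1)
    (hA : ∀ a ∈ vis, D.parent a ∈ vis ∨ D.dfi a ≤ D.dfi v)
    (hB : ∀ e ∈ D.backEdges, e.1 = v ∨ e ∈ es ∨ (e.1 ∈ vis ∧ e.2 ∈ vis))
    (hN : ∃ y1 ∈ vis, ∃ y2 ∈ vis, y1 ≠ y2)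
    (hvw : (v, w) ∈ D.backEdges)
    (hcyc : IsCycleChain
      (v :: towardRoot D.parent D.root (insert v vis) (Fintype.card V) w)) : False := by
  obtain ⟨hadj, -, k, hk2, hkv⟩ := D.backEdges_spec _ hvw
  have hadj : G.Adj v w := hadj
  have hkv : D.parent^[k] w = v := hkv
  obtain ⟨m, hmk, hrep, hstop, hmin⟩ := chain_struct D vis v w k (by omega) hkv
  rw [hrep] at hcyc
  have hmv : D.parent^[m] w = v := (cycle_iff D v w m).mp hcyc
  have hm1 : 1 ≤ m := by
    by_contra h
    have : m = 0 := by omega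
    rw [this] at hmv
    exact hadj.ne (by simpa using hmv.symm)
  have hSw : Sset D vis v w := ⟨m, by omega, hmv, fun j hj => hmin j hj⟩
  obtain ⟨y1, hy1, y2, hy2, hne⟩ := hN
  have hy : ∃ y, y ∈ vis ∧ y ≠ v := by
    by_cases h : y1 = v
    · exact ⟨y2, hy2, fun hc => hne (by rw [h, hc])⟩
    · exact ⟨y1, hy1, h⟩
  obtain ⟨y, hyvis, hyv⟩ := hy
  have hwv : w ≠ v := fun hc => hadj.ne hc.symm
  have hreach := ((hnocut v).preconnected ⟨w, hwv⟩ ⟨y, hyv⟩)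
  obtain ⟨wk⟩ := hreach
  have hSy : Sset D vis v y :=
    walk_in_S D vis v (barrier D vis v es hsub hsortv hA hB) _ _ wk hSw
  exact not_trig_self D hSy (Or.inl (Finset.mem_insert_of_mem hyvis))

lemma noCycle_aux
    (hnocut : ∀ u : V, (SimpleGraph.induce {x : V | x ≠ u} G).Connected) :
    ∀ (es : List (V × V)) (vis : Finset V),
      (∀ e ∈ es, e ∈ D.backEdges) →
      es.Pairwise (fun e f => D.dfi e.1 ≤ D.dfi f.1) →
      (∀ a ∈ vis, D.parent a ∈ vis ∨ ∀ e ∈ es, D.dfi a ≤ D.dfi e.1) →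
      (∀ e ∈ D.backEdges, e ∈ es ∨ (e.1 ∈ vis ∧ e.2 ∈ vis)) →
      (∃ y1 ∈ vis, ∃ y2 ∈ vis, y1 ≠ y2) →
      ∀ c ∈ runChains D.parent D.root es vis, ¬ IsCycleChain c := by
  intro es
  induction es with
  | nil => intro vis _ _ _ _ _ c hc; simp [runChains] at hc
  | cons e es ih =>
      obtain ⟨v, w⟩ := e
      intro vis hsub hsorted hA hB hN c hc
      rw [runChains_cons] at hc
      have hpair := List.pairwise_cons.mp hsorted
      have hvw : (v, w) ∈ D.backEdges := hsub _ (List.mem_cons_self)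
      have hsortv : ∀ e ∈ es, D.dfi v ≤ D.dfi e.1 := fun e he => hpair.1 e he
      have hA' : ∀ a ∈ vis, D.parent a ∈ vis ∨ D.dfi a ≤ D.dfi v := by
        intro a ha
        rcases hA a ha with h | h
        · exact Or.inl h
        · exact Or.inr (h _ (List.mem_cons_self))
      have hB' : ∀ e ∈ D.backEdges, e.1 = v ∨ e ∈ es ∨ (e.1 ∈ vis ∧ e.2 ∈ vis) := by
        intro e he
        rcases hB e he with h | h
        · rcases List.mem_cons.mp h with h | h
          · exact Or.inl (by rw [h])
          · exact Or.inr (Or.inl h)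
        · exact Or.inr (Or.inr h)
      rcases List.mem_cons.mp hc with hc | hc
      · rw [hc]
        intro hcyc
        exact head_no_cycle D hnocut vis v w es (fun e he => hsub _ (List.mem_cons_of_mem _ he))
          hsortv hA' hB' hN hvw hcyc
      · -- tail
        obtain ⟨hadj, -, k, hk2, hkv⟩ := D.backEdges_spec _ hvw
        have hadj : G.Adj v w := hadj
        have hkv : D.parent^[k] w = v := hkv
        obtain ⟨m, hmk, hrep, hstop, hminm⟩ := chain_struct D vis v w k (by omega) hkv
        set L := v :: towardRoot D.parent D.root (insert v vis) (Fintype.card V) w with hL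
        have hmemL : ∀ a, a ∈ L ↔ a = v ∨ ∃ t, t ≤ m ∧ a = D.parent^[t] w := by
          intro a
          rw [hL, hrep]
          exact chain_mem D v w m a
        refine ih (vis ∪ L.toFinset) (fun e he => hsub _ (List.mem_cons_of_mem _ he))
          hpair.2 ?_ ?_ ?_ c hc
        · -- hA preserved
          intro a ha
          rcases Finset.mem_union.mp ha with ha | ha
          · rcases hA a ha with h | h
            · exact Or.inl (Finset.mem_union_left _ h)
            · exact Or.inr (fun e he => h e (List.mem_cons_of_mem _ he))
          · rcases (hmemL a).mp (List.mem_toFinset.mp ha) with rfl | ⟨t, htm, rfl⟩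
            · exact Or.inr hsortv
            · rcases lt_or_eq_of_le htm with ht | ht
              · refine Or.inl (Finset.mem_union_right _ (List.mem_toFinset.mpr ?_))
                exact (hmemL _).mpr
                  (Or.inr ⟨t + 1, by omega, (Function.iterate_succ_apply' _ _ _).symm⟩)
              · subst ht
                rcases Finset.mem_insert.mp hstop with h | h
                · rw [h]
                  exact Or.inr hsortv
                · rcases hA _ h with h' | h'
                  · exact Or.inl (Finset.mem_union_left _ h')
                  · exact Or.inr (fun e he => h' e (List.mem_cons_of_mem _ he))
        · -- hB preserved
          intro e he
          rcases hB e he with h | h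
          · rcases List.mem_cons.mp h with h | h
            · refine Or.inr ?_
              rw [h]
              constructor
              · exact Finset.mem_union_right _ (List.mem_toFinset.mpr
                  ((hmemL v).mpr (Or.inl rfl)))
              · exact Finset.mem_union_right _ (List.mem_toFinset.mpr
                  ((hmemL w).mpr (Or.inr ⟨0, by omega, rfl⟩)))
            · exact Or.inl h
          · exact Or.inr ⟨Finset.mem_union_left _ h.1, Finset.mem_union_left _ h.2⟩
        · obtain ⟨y1, hy1, y2, hy2, hne⟩ := hN
          exact ⟨y1, Finset.mem_union_left _ hy1, y2, Finset.mem_union_left _ hy2, hne⟩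

end Forward2

section ForwardTop

set_option linter.unusedSectionVars false

variable {G : SimpleGraph V} (D : SchmidtDFS G)

lemma exists_nbr (hG : G.Connected) (hnt : Nontrivial V) (v : V) : ∃ n, G.Adj v n := by
  haveI := hnt
  obtain ⟨u, hu⟩ := exists_ne v
  obtain ⟨wk⟩ := hG.preconnected v u
  cases wk with
  | nil => exact absurd rfl hu.symm
  | cons h q => exact ⟨_, h⟩

lemma degree_two_of_nocut [DecidableRel G.Adj] (hG : G.Connected) (hcard : 3 ≤ Fintype.card V)
    (hnocut : ∀ u : V, (SimpleGraph.induce {x : V | x ≠ u} G).Connected) :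
    ∀ v, 2 ≤ G.degree v := by
  intro v
  by_contra hlt
  have hone : ∀ a ∈ G.neighborFinset v, ∀ b ∈ G.neighborFinset v, a = b := by
    apply Finset.card_le_one.mp
    rw [SimpleGraph.card_neighborFinset_eq_degree]
    omega
  have hnt : Nontrivial V := Fintype.one_lt_card_iff_nontrivial.mp (by omega)
  obtain ⟨n, hn⟩ := exists_nbr hG hnt v
  have hnmem : n ∈ G.neighborFinset v := (SimpleGraph.mem_neighborFinset _ _ _).mpr hn
  -- find z different from v and n
  have hz : ∃ z, z ≠ v ∧ z ≠ n := by
    have h2 : ({v, n} : Finset V).card ≤ 2 := Finset.card_insert_le _ _ |>.trans (by simp)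
    have : (({v, n} : Finset V)ᶜ).Nonempty := by
      rw [← Finset.card_pos, Finset.card_compl]
      omega
    obtain ⟨z, hz⟩ := this
    simp only [Finset.mem_compl, Finset.mem_insert, Finset.mem_singleton, not_or] at hz
    exact ⟨z, hz.1, hz.2⟩
  obtain ⟨z, hzv, hzn⟩ := hz
  have hvn : v ≠ n := hn.ne
  obtain ⟨wk⟩ := (hnocut n).preconnected ⟨v, hvn⟩ ⟨z, hzn⟩
  -- walking from v in G - n is stuck at v
  have key : ∀ (x y : ↥{u : V | u ≠ n}) (wk : (SimpleGraph.induce {u : V | u ≠ n} G).Walk x y),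
      x.1 = v → y.1 = v := by
    intro x y wk
    induction wk with
    | nil => exact id
    | cons h q ih =>
        rename_i a b c
        intro hav
        have hadj : G.Adj a.1 b.1 := by simpa using h
        rw [hav] at hadj
        have : b.1 = n := hone _ ((SimpleGraph.mem_neighborFinset _ _ _).mpr hadj) _ hnmem
        exact absurd this b.2
  exact hzv (key _ _ wk rfl)

lemma backEdges_ne_nil [DecidableRel G.Adj] (hcard : 3 ≤ Fintype.card V)
    (hdeg : ∀ v, 2 ≤ G.degree v) :
    D.backEdges ≠ [] := by
  intro hBE
  have hne : (Finset.univ : Finset V).Nonempty := by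
    rw [← Finset.card_pos, Finset.card_univ]
    omega
  obtain ⟨x, -, hmax⟩ := Finset.exists_max_image Finset.univ D.dfi hne
  have hsub : G.neighborFinset x ⊆ {D.parent x} := by
    intro b hb
    have hadj : G.Adj x b := (SimpleGraph.mem_neighborFinset _ _ _).mp hb
    by_cases h1 : x = D.parent b
    · exfalso
      have hbr : b ≠ D.root := by
        intro hbr
        rw [hbr, D.parent_root, ← hbr] at h1
        exact hadj.ne h1
      have := D.dfi_parent b hbr
      rw [← h1] at this
      exact absurd (hmax b (Finset.mem_univ b)) (by omega)
    · by_cases h2 : b = D.parent x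
      · simp [h2]
      · rcases D.backEdges_complete x b hadj h1 h2 with h | h <;> simp [hBE] at h
  have : G.degree x ≤ 1 := by
    rw [← SimpleGraph.card_neighborFinset_eq_degree]
    exact (Finset.card_le_card hsub).trans (by simp)
  exact absurd (hdeg x) (by omega)

lemma first_chain_cycle (v w : V) (hvw : (v, w) ∈ D.backEdges) :
    IsCycleChain (v :: towardRoot D.parent D.root (insert v ∅) (Fintype.card V) w) := by
  obtain ⟨hadj, -, k, hk2, hkv⟩ := D.backEdges_spec _ hvw
  have hkv : D.parent^[k] w = v := hkv
  obtain ⟨m, hmk, hrep, hstop, hmin⟩ := chain_struct D ∅ v w k (by omega) hkv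
  rw [hrep]
  apply (cycle_iff D v w m).mpr
  rcases Finset.mem_insert.mp hstop with h | h
  · exact h
  · simp at h

end ForwardTop

section ForwardTop2

set_option linter.unusedSectionVars false

variable {G : SimpleGraph V} (D : SchmidtDFS G)

lemma forward_dir [DecidableRel G.Adj] (hG : G.Connected) (hcard : 3 ≤ Fintype.card V)
    (hnocut : ∀ u : V, (SimpleGraph.induce {x : V | x ≠ u} G).Connected) :
    2 ≤ G.minDegree ∧ ∃ c cs, D.chains = c :: cs ∧ IsCycleChain c ∧
      ∀ c' ∈ cs, ¬ IsCycleChain c' := by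
  have hdeg := degree_two_of_nocut hG hcard hnocut
  haveI : Nonempty V := Fintype.card_pos_iff.mp (by omega)
  refine ⟨G.le_minDegree_of_forall_le_degree 2 hdeg, ?_⟩
  cases hBE : D.backEdges with
  | nil => exact absurd hBE (backEdges_ne_nil D hcard hdeg)
  | cons e rest =>
      obtain ⟨v₁, w₁⟩ := e
      have hvw : (v₁, w₁) ∈ D.backEdges := by rw [hBE]; exact List.mem_cons_self
      obtain ⟨hadj, -, k, hk2, hkv⟩ := D.backEdges_spec _ hvw
      have hadj : G.Adj v₁ w₁ := hadj
      have hkv : D.parent^[k] w₁ = v₁ := hkv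
      obtain ⟨m, hmk, hrep, hstop, hmin⟩ := chain_struct D ∅ v₁ w₁ k (by omega) hkv
      have hpair := List.pairwise_cons.mp (by rw [← hBE]; exact D.backEdges_sorted)
      rw [SchmidtDFS.chains, hBE, runChains_cons]
      set L := v₁ :: towardRoot D.parent D.root (insert v₁ ∅) (Fintype.card V) w₁ with hL
      have hmemL : ∀ a, a ∈ L ↔ a = v₁ ∨ ∃ t, t ≤ m ∧ a = D.parent^[t] w₁ := by
        intro a
        rw [hL, hrep]
        exact chain_mem D v₁ w₁ m a
      have hstopv : D.parent^[m] w₁ = v₁ := by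
        rcases Finset.mem_insert.mp hstop with h | h
        · exact h
        · simp at h
      refine ⟨_, _, rfl, first_chain_cycle D v₁ w₁ hvw, ?_⟩
      intro c' hc' hcyc
      refine noCycle_aux D hnocut rest (∅ ∪ L.toFinset)
        (fun e he => by rw [hBE]; exact List.mem_cons_of_mem _ he)
        hpair.2 ?_ ?_ ?_ c' hc' hcyc
      · intro a ha
        rw [Finset.empty_union] at ha
        rcases (hmemL a).mp (List.mem_toFinset.mp ha) with rfl | ⟨t, htm, rfl⟩
        · exact Or.inr (fun e he => hpair.1 e he)
        · rcases lt_or_eq_of_le htm with ht | ht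
          · refine Or.inl (Finset.mem_union_right _ (List.mem_toFinset.mpr ?_))
            exact (hmemL _).mpr
              (Or.inr ⟨t + 1, by omega, (Function.iterate_succ_apply' _ _ _).symm⟩)
          · subst ht
            rw [hstopv]
            exact Or.inr (fun e he => hpair.1 e he)
      · intro e he
        rw [hBE] at he
        rcases List.mem_cons.mp he with h | h
        · refine Or.inr ?_
          rw [h]
          exact ⟨Finset.mem_union_right _ (List.mem_toFinset.mpr ((hmemL v₁).mpr (Or.inl rfl))),
            Finset.mem_union_right _ (List.mem_toFinset.mpr
              ((hmemL w₁).mpr (Or.inr ⟨0, by omega, rfl⟩)))⟩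
        · exact Or.inl h
      · refine ⟨v₁, Finset.mem_union_right _ (List.mem_toFinset.mpr ((hmemL v₁).mpr (Or.inl rfl))),
          w₁, Finset.mem_union_right _ (List.mem_toFinset.mpr
            ((hmemL w₁).mpr (Or.inr ⟨0, by omega, rfl⟩))), hadj.ne⟩

end ForwardTop2

section Backward

set_option linter.unusedSectionVars false

variable {G : SimpleGraph V} (D : SchmidtDFS G)

lemma origin_visited (vis : Finset V) (v w v₁ : V) (k : ℕ) (hk : 1 ≤ k)
    (hkv : D.parent^[k] w = v)
    (hFE : ∀ a ∈ vis, D.parent a ∈ vis ∨ a = v₁)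
    (hv₁ : v₁ ∈ vis) (hS1 : D.dfi v₁ ≤ D.dfi v)
    (hnc : ¬ IsCycleChain
      (v :: towardRoot D.parent D.root (insert v vis) (Fintype.card V) w)) :
    v ∈ vis := by
  by_contra hvv
  obtain ⟨m, hmk, hrep, hstop, hmin⟩ := chain_struct D vis v w k hk hkv
  have hclimb : ∀ t y, y ∈ vis → D.parent^[t] y = v → False := by
    intro t
    induction t with
    | zero => intro y hy h; rw [Function.iterate_zero_apply] at h; exact hvv (h ▸ hy)
    | succ t ih =>
        intro y hy h
        rcases hFE y hy with h' | h'
        · exact ih (D.parent y) h' (by rwa [← Function.iterate_succ_apply])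
        · subst h'
          have hne : D.parent^[t+1] y ≠ y := fun hc => hvv (by rw [← h, hc]; exact hy)
          have := dfi_iter_lt D.parent_root D.dfi_inj D.dfi_parent (t+1) y hne
          rw [h] at this
          omega
  have hstopv : D.parent^[m] w = v := by
    rcases Finset.mem_insert.mp hstop with h | h
    · exact h
    · exfalso
      have hmklt : m < k := by
        rcases eq_or_lt_of_le hmk with h' | h'
        · exfalso; rw [h', hkv] at h; exact hvv h
        · exact h'
      refine hclimb (k - m) _ h ?_
      rw [← Function.iterate_add_apply]
      have : k - m + m = k := by omega
      rw [this, hkv]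
  exact hnc (by rw [hrep]; exact (cycle_iff D v w m).mpr hstopv)

lemma backward_main (v₁ : V) :
    ∀ (es : List (V × V)) (vis : Finset V),
      (∀ e ∈ es, e ∈ D.backEdges) →
      (∀ e ∈ es, D.dfi v₁ ≤ D.dfi e.1) →
      (∀ a ∈ vis, D.parent a ∈ vis ∨ a = v₁) →
      (∀ a ∈ vis, ∃ n, D.parent^[n] a = v₁) →
      v₁ ∈ vis →
      (∀ e ∈ D.backEdges, e ∈ es ∨ (e.1 ∈ vis ∧ e.2 ∈ vis)) →
      (∀ c ∈ runChains D.parent D.root es vis, ¬ IsCycleChain c) →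
      (∀ vr a b, a ∈ vis → b ∈ vis → a ≠ vr → b ≠ vr → Reach G vr a b) →
      (∀ a ∈ visList D.parent D.root es vis, D.parent a ∈ visList D.parent D.root es vis ∨ a = v₁) ∧
      (∀ a ∈ visList D.parent D.root es vis, ∃ n, D.parent^[n] a = v₁) ∧
      v₁ ∈ visList D.parent D.root es vis ∧
      (∀ e ∈ D.backEdges, e.1 ∈ visList D.parent D.root es vis ∧
        e.2 ∈ visList D.parent D.root es vis) ∧
      (∀ vr a b, a ∈ visList D.parent D.root es vis → b ∈ visList D.parent D.root es vis →
        a ≠ vr → b ≠ vr → Reach G vr a b) := by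
  intro es
  induction es with
  | nil =>
      intro vis _ _ hFE hD1 hv₁ hB hnc hCON
      refine ⟨hFE, hD1, hv₁, ?_, hCON⟩
      intro e he
      rcases hB e he with h | h
      · simp at h
      · exact h
  | cons e es ih =>
      obtain ⟨v, w⟩ := e
      intro vis hsub hS1 hFE hD1 hv₁ hB hnc hCON
      have hvw : (v, w) ∈ D.backEdges := hsub _ (List.mem_cons_self)
      obtain ⟨hadj, -, k, hk2, hkv⟩ := D.backEdges_spec _ hvw
      have hadj : G.Adj v w := hadj
      have hkv : D.parent^[k] w = v := hkv
      have hnchead : ¬ IsCycleChain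
          (v :: towardRoot D.parent D.root (insert v vis) (Fintype.card V) w) :=
        hnc _ (by rw [runChains_cons]; exact List.mem_cons_self)
      have hvvis : v ∈ vis := origin_visited D vis v w v₁ k (by omega) hkv hFE hv₁
        (hS1 _ (List.mem_cons_self)) hnchead
      obtain ⟨m, hmk, hrep, hstop, hmin⟩ := chain_struct D vis v w k (by omega) hkv
      set L := v :: towardRoot D.parent D.root (insert v vis) (Fintype.card V) w with hL
      have hmemL : ∀ a, a ∈ L ↔ a = v ∨ ∃ t, t ≤ m ∧ a = D.parent^[t] w := by
        intro a
        rw [hL, hrep]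
        exact chain_mem D v w m a
      have hstopvis : D.parent^[m] w ∈ vis := by
        rcases Finset.mem_insert.mp hstop with h | h
        · exact absurd (by rw [hL, hrep]; exact (cycle_iff D v w m).mpr h) hnchead
        · exact h
      have hnroot : ∀ j < m, D.parent^[j] w ≠ D.root := by
        intro j hj hc
        exact hmin j hj (Or.inr hc)
      have hnotvis : ∀ j < m, D.parent^[j] w ∉ vis ∧ D.parent^[j] w ≠ v := by
        intro j hj
        constructor
        · intro hc; exact hmin j hj (Or.inl (Finset.mem_insert_of_mem hc))
        · intro hc; exact hmin j hj (Or.inl (by rw [hc]; exact Finset.mem_insert_self _ _))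
      have hseg : ∀ i, i + 1 ≤ m → G.Adj (D.parent^[i] w) (D.parent^[i+1] w) := by
        intro i hi
        rw [Function.iterate_succ_apply']
        exact D.parent_adj _ (hnroot i (by omega))
      have hinj : ∀ t t', t ≤ t' → t' ≤ m → D.parent^[t] w = D.parent^[t'] w → t = t' :=
        path_inj D hnroot
      -- anchor: every new vertex reaches a visited vertex avoiding vr
      have hanchor : ∀ vr a, a ∈ vis ∪ L.toFinset → a ≠ vr →
          ∃ a', a' ∈ vis ∧ a' ≠ vr ∧ Reach G vr a a' := by
        intro vr a ha hav
        rcases Finset.mem_union.mp ha with ha | ha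
        · exact ⟨a, ha, hav, reach_refl vr a⟩
        · rcases (hmemL a).mp (List.mem_toFinset.mp ha) with rfl | ⟨t, htm, rfl⟩
          · exact ⟨a, hvvis, hav, reach_refl vr a⟩
          · rcases eq_or_lt_of_le htm with ht | ht
            · subst ht; exact ⟨_, hstopvis, hav, reach_refl vr _⟩
            · by_cases hblock : ∃ s, t < s ∧ s ≤ m ∧ D.parent^[s] w = vr
              · obtain ⟨s, hts, hsm, hsvr⟩ := hblock
                have hdown : Reach G vr (D.parent^[t] w) (D.parent^[0] w) := by
                  refine reach_symm (reach_seg vr (fun i => D.parent^[i] w) hseg 0 t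
                    (by omega) (by omega) ?_)
                  intro s' hs0 hs't hc
                  rw [← hsvr] at hc
                  have := hinj s' s (by omega) hsm hc
                  omega
                have hvnvr : v ≠ vr := by
                  intro hc
                  rcases eq_or_lt_of_le hsm with h' | h'
                  · refine hnchead ?_
                    rw [hL, hrep]
                    refine (cycle_iff D v w m).mpr ?_
                    rw [← h', hsvr, hc]
                  · exact (hnotvis s h').2 (by rw [hsvr, ← hc])
                have hwnvr : D.parent^[0] w ≠ vr := by
                  intro hc
                  rw [← hsvr] at hc
                  have := hinj 0 s (by omega) hsm hc
                  omega
                refine ⟨v, hvvis, hvnvr, ?_⟩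
                refine reach_trans hdown ?_ hwnvr
                exact reach_symm (reach_adj hadj)
              · push_neg at hblock
                refine ⟨_, hstopvis, hblock m ht le_rfl, ?_⟩
                refine reach_seg vr (fun i => D.parent^[i] w) hseg t m htm le_rfl ?_
                intro s hts hsm
                rcases eq_or_lt_of_le hts with h' | h'
                · exact h' ▸ hav
                · exact hblock s h' hsm
      refine ih (vis ∪ L.toFinset) (fun e he => hsub _ (List.mem_cons_of_mem _ he))
        (fun e he => hS1 _ (List.mem_cons_of_mem _ he)) ?_ ?_
        (Finset.mem_union_left _ hv₁) ?_
        (fun c hc => hnc c (by rw [runChains_cons]; exact List.mem_cons_of_mem _ hc)) ?_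
      · -- hFE preserved
        intro a ha
        rcases Finset.mem_union.mp ha with ha | ha
        · rcases hFE a ha with h | h
          · exact Or.inl (Finset.mem_union_left _ h)
          · exact Or.inr h
        · rcases (hmemL a).mp (List.mem_toFinset.mp ha) with rfl | ⟨t, htm, rfl⟩
          · rcases hFE a hvvis with h | h
            · exact Or.inl (Finset.mem_union_left _ h)
            · exact Or.inr h
          · rcases eq_or_lt_of_le htm with ht | ht
            · subst ht
              rcases hFE _ hstopvis with h | h
              · exact Or.inl (Finset.mem_union_left _ h)
              · exact Or.inr h
            · refine Or.inl (Finset.mem_union_right _ (List.mem_toFinset.mpr ?_))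
              exact (hmemL _).mpr
                (Or.inr ⟨t + 1, by omega, (Function.iterate_succ_apply' _ _ _).symm⟩)
      · -- hD1 preserved
        intro a ha
        rcases Finset.mem_union.mp ha with ha | ha
        · exact hD1 a ha
        · rcases (hmemL a).mp (List.mem_toFinset.mp ha) with rfl | ⟨t, htm, rfl⟩
          · exact hD1 a hvvis
          · obtain ⟨n, hn⟩ := hD1 _ hstopvis
            refine ⟨n + (m - t), ?_⟩
            have he : n + (m - t) + t = n + m := by omega
            calc D.parent^[n + (m - t)] (D.parent^[t] w)
                = D.parent^[n + (m - t) + t] w := (Function.iterate_add_apply _ _ _ _).symm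
              _ = D.parent^[n + m] w := by rw [he]
              _ = D.parent^[n] (D.parent^[m] w) := Function.iterate_add_apply _ _ _ _
              _ = v₁ := hn
      · -- hB preserved
        intro e he
        rcases hB e he with h | h
        · rcases List.mem_cons.mp h with h | h
          · refine Or.inr ?_
            rw [h]
            exact ⟨Finset.mem_union_right _ (List.mem_toFinset.mpr ((hmemL v).mpr (Or.inl rfl))),
              Finset.mem_union_right _ (List.mem_toFinset.mpr
                ((hmemL w).mpr (Or.inr ⟨0, by omega, rfl⟩)))⟩
          · exact Or.inl h
        · exact Or.inr ⟨Finset.mem_union_left _ h.1, Finset.mem_union_left _ h.2⟩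
      · -- CON preserved
        intro vr a b ha hb hav hbv
        obtain ⟨a', ha', hav', hra⟩ := hanchor vr a ha hav
        obtain ⟨b', hb', hbv', hrb⟩ := hanchor vr b hb hbv
        exact reach_trans (reach_trans hra (hCON vr a' b' ha' hb' hav' hbv') hav')
          (reach_symm hrb) hbv'

end Backward

section Coverage

set_option linter.unusedSectionVars false

variable {G : SimpleGraph V} (D : SchmidtDFS G)

lemma coverage [DecidableRel G.Adj] (hdeg : ∀ v, 2 ≤ G.degree v) (v₁ : V) (F : Finset V)
    (hFE : ∀ a ∈ F, D.parent a ∈ F ∨ a = v₁)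
    (hD1 : ∀ a ∈ F, ∃ n, D.parent^[n] a = v₁)
    (hv₁ : v₁ ∈ F)
    (hBEF : ∀ e ∈ D.backEdges, e.1 ∈ F ∧ e.2 ∈ F) :
    ∀ u, u ∈ F := by
  by_contra hcov
  push_neg at hcov
  set U : Finset V := Finset.univ.filter (· ∉ F) with hU
  have hUmem : ∀ u, u ∈ U ↔ u ∉ F := by
    intro u; rw [hU]; simp
  have hUne : U.Nonempty := by
    obtain ⟨u, hu⟩ := hcov
    exact ⟨u, (hUmem u).mpr hu⟩
  have f1 : ∀ u, u ∉ F → ∀ b, G.Adj u b → b = D.parent u ∨ D.parent b = u := by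
    intro u hu b hadj
    by_cases h1 : u = D.parent b
    · exact Or.inr h1.symm
    · by_cases h2 : b = D.parent u
      · exact Or.inl h2
      · rcases D.backEdges_complete u b hadj h1 h2 with h | h
        · exact absurd (hBEF _ h).1 hu
        · exact absurd (hBEF _ h).2 hu
  have hFE' : ∀ c, c ∈ F → D.parent c ∉ F → c = v₁ := by
    intro c hc hpc
    rcases hFE c hc with h | h
    · exact absurd h hpc
    · exact h
  obtain ⟨x, hxU, hmax⟩ := Finset.exists_max_image U D.dfi hUne
  have hxF : x ∉ F := (hUmem x).mp hxU
  -- a neighbor of x that is a child must be v₁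
  have hchildF : ∀ b, G.Adj x b → D.parent b = x → b = v₁ := by
    intro b hadj hpb
    have hbF : b ∈ F := by
      by_contra hbF
      have hbr : b ≠ D.root := by
        intro hc
        rw [hc, D.parent_root] at hpb
        exact hadj.ne (hpb ▸ hc).symm
      have := D.dfi_parent b hbr
      rw [hpb] at this
      have := hmax b ((hUmem b).mpr hbF)
      omega
    exact hFE' b hbF (hpb ▸ hxF)
  by_cases hv₁r : v₁ = D.root
  · -- Case A : v₁ is the root; x has no child neighbors at all
    have hsub : G.neighborFinset x ⊆ {D.parent x} := by
      intro b hb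
      have hadj : G.Adj x b := (SimpleGraph.mem_neighborFinset _ _ _).mp hb
      rcases f1 x hxF b hadj with h | h
      · simp [h]
      · exfalso
        have hbv := hchildF b hadj h
        rw [hbv, hv₁r, D.parent_root] at h
        apply hxF
        rw [← h, ← hv₁r]
        exact hv₁
    have : G.degree x ≤ 1 := by
      rw [← SimpleGraph.card_neighborFinset_eq_degree]
      exact (Finset.card_le_card hsub).trans (by simp)
    exact absurd (hdeg x) (by omega)
  · -- Case B
    have hxchild : ∃ c, G.Adj x c ∧ D.parent c = x ∧ c = v₁ := by
      by_contra hno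
      push_neg at hno
      have hsub : G.neighborFinset x ⊆ {D.parent x} := by
        intro b hb
        have hadj : G.Adj x b := (SimpleGraph.mem_neighborFinset _ _ _).mp hb
        rcases f1 x hxF b hadj with h | h
        · simp [h]
        · exact absurd (hchildF b hadj h) (hno b hadj h)
      have : G.degree x ≤ 1 := by
        rw [← SimpleGraph.card_neighborFinset_eq_degree]
        exact (Finset.card_le_card hsub).trans (by simp)
      exact absurd (hdeg x) (by omega)
    obtain ⟨c, hadjc, hpc, hcv₁⟩ := hxchild
    rw [hcv₁] at hadjc hpc
    have hxr : x ≠ D.root := by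
      intro hc
      have hsub : G.neighborFinset x ⊆ {v₁} := by
        intro b hb
        have hadj : G.Adj x b := (SimpleGraph.mem_neighborFinset _ _ _).mp hb
        rcases f1 x hxF b hadj with h | h
        · exfalso
          rw [hc, D.parent_root, ← hc] at h
          exact hadj.ne h.symm
        · simp [hchildF b hadj h]
      have : G.degree x ≤ 1 := by
        rw [← SimpleGraph.card_neighborFinset_eq_degree]
        exact (Finset.card_le_card hsub).trans (by simp)
      exact absurd (hdeg x) (by omega)
    have g1 : ∀ u, u ∉ F → D.parent u ∉ F := by
      intro u huF hpuF
      obtain ⟨n, hn⟩ := hD1 _ hpuF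
      have h1 : D.parent^[n + 1] u = v₁ := by
        rw [Function.iterate_succ_apply]
        exact hn
      have h2 : D.parent^[n + 2] u = x := by
        rw [show n + 2 = (n + 1) + 1 from rfl, Function.iterate_succ_apply', h1, hpc]
      by_cases hux : x = u
      · rw [hux] at h2
        exact hxr (hux ▸ iter_eq_root D.parent_root D.reaches_root (n+2) u (by omega) h2)
      · have hne : D.parent^[n+2] u ≠ u := by rw [h2]; exact hux
        have := dfi_iter_lt D.parent_root D.dfi_inj D.dfi_parent (n+2) u hne
        rw [h2] at this
        have := hmax u ((hUmem u).mpr huF)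
        omega
    have g1' : ∀ n u, u ∉ F → D.parent^[n] u ∉ F := by
      intro n
      induction n with
      | zero => intro u hu; exact hu
      | succ n ih =>
          intro u hu
          rw [Function.iterate_succ_apply']
          exact g1 _ (ih u hu)
    have hrootU : D.root ∉ F := by
      obtain ⟨K, hK⟩ := D.reaches_root x
      rw [← hK]
      exact g1' K x hxF
    have hrU : D.root ∈ U := (hUmem _).mpr hrootU
    set T : V → Finset V := fun u => U.filter (fun c => D.parent c = u ∧ c ≠ u) with hT
    have hTmem : ∀ u c, c ∈ T u ↔ (c ∈ U ∧ D.parent c = u ∧ c ≠ u) := by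
      intro u c
      rw [hT]
      simp [Finset.mem_filter]
    have bound1 : G.degree x ≤ 2 := by
      have hsub : G.neighborFinset x ⊆ {D.parent x, v₁} := by
        intro b hb
        have hadj : G.Adj x b := (SimpleGraph.mem_neighborFinset _ _ _).mp hb
        rcases f1 x hxF b hadj with h | h
        · rw [h]; exact Finset.mem_insert_self _ _
        · rw [hchildF b hadj h]
          exact Finset.mem_insert_of_mem (Finset.mem_singleton_self _)
      rw [← SimpleGraph.card_neighborFinset_eq_degree]
      exact (Finset.card_le_card hsub).trans ((Finset.card_insert_le _ _).trans (by simp))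
    have bound2 : ∀ u, u ∈ U → u ≠ x → G.neighborFinset u ⊆ insert (D.parent u) (T u) := by
      intro u hu hux b hb
      have hadj : G.Adj u b := (SimpleGraph.mem_neighborFinset _ _ _).mp hb
      rcases f1 u ((hUmem u).mp hu) b hadj with h | h
      · rw [h]; exact Finset.mem_insert_self _ _
      · by_cases hbF : b ∈ F
        · have hbv := hFE' b hbF (by rw [h]; exact (hUmem u).mp hu)
          exact absurd (by rw [← h, hbv, hpc]) hux
        · exact Finset.mem_insert_of_mem
            ((hTmem u b).mpr ⟨(hUmem b).mpr hbF, h, hadj.ne'⟩)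
    have bound2r : G.neighborFinset D.root ⊆ T D.root := by
      intro b hb
      have hadj : G.Adj D.root b := (SimpleGraph.mem_neighborFinset _ _ _).mp hb
      have hmem := bound2 D.root hrU (fun hc => hxr hc.symm) hb
      rcases Finset.mem_insert.mp hmem with h | h
      · rw [D.parent_root] at h
        exact absurd h hadj.ne'
      · exact h
    have hW_r : D.root ∈ U.erase x := Finset.mem_erase.mpr ⟨fun hc => hxr hc.symm, hrU⟩
    set W : Finset V := (U.erase x).erase D.root with hWdef
    have hWmem : ∀ u, u ∈ W → u ∈ U ∧ u ≠ x ∧ u ≠ D.root := by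
      intro u hu
      rw [hWdef] at hu
      obtain ⟨h1, h2⟩ := Finset.mem_erase.mp hu
      obtain ⟨h3, h4⟩ := Finset.mem_erase.mp h2
      exact ⟨h4, h3, h1⟩
    have hdegsum : ∀ u ∈ W, G.degree u ≤ 1 + (T u).card := by
      intro u hu
      obtain ⟨huU, hux, hur⟩ := hWmem u hu
      rw [← SimpleGraph.card_neighborFinset_eq_degree]
      exact (Finset.card_le_card (bound2 u huU hux)).trans
        ((Finset.card_insert_le _ _).trans (by omega))
    have hsum_split1 : ∑ u ∈ U.erase x, G.degree u + G.degree x = ∑ u ∈ U, G.degree u :=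
      Finset.sum_erase_add _ _ hxU
    have hsum_split2 : ∑ u ∈ W, G.degree u + G.degree D.root = ∑ u ∈ U.erase x, G.degree u := by
      rw [hWdef]
      exact Finset.sum_erase_add _ _ hW_r
    have hsum_W : ∑ u ∈ W, G.degree u ≤ ∑ u ∈ W, (1 + (T u).card) :=
      Finset.sum_le_sum hdegsum
    have hsum_W2 : ∑ u ∈ W, (1 + (T u).card) = W.card + ∑ u ∈ W, (T u).card := by
      rw [Finset.sum_add_distrib, Finset.sum_const, smul_eq_mul, mul_one]
    have hTr : G.degree D.root ≤ (T D.root).card := by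
      rw [← SimpleGraph.card_neighborFinset_eq_degree]
      exact Finset.card_le_card bound2r
    have hsumT : ∑ u ∈ W, (T u).card + (T D.root).card = ∑ u ∈ U.erase x, (T u).card := by
      rw [hWdef]
      exact Finset.sum_erase_add _ _ hW_r
    have hdisj : ∀ u ∈ U.erase x, ∀ u' ∈ U.erase x, u ≠ u' → Disjoint (T u) (T u') := by
      intro u _ u' _ hne
      rw [Finset.disjoint_left]
      intro c hc hc'
      exact hne (((hTmem u c).mp hc).2.1 ▸ ((hTmem u' c).mp hc').2.1 ▸ rfl)
    have hsum1 : ∑ u ∈ U.erase x, (T u).card = ((U.erase x).biUnion T).card :=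
      (Finset.card_biUnion hdisj).symm
    have hsub4 : (U.erase x).biUnion T ⊆ U.erase D.root := by
      intro c hc
      obtain ⟨u, hu, hcT⟩ := Finset.mem_biUnion.mp hc
      obtain ⟨hcU, hpcu, hcu⟩ := (hTmem u c).mp hcT
      refine Finset.mem_erase.mpr ⟨?_, hcU⟩
      intro hcr
      apply hcu
      rw [hcr] at hpcu ⊢
      rw [D.parent_root] at hpcu
      exact hpcu
    have hsumT2 : ∑ u ∈ U.erase x, (T u).card ≤ (U.erase D.root).card := by
      rw [hsum1]
      exact Finset.card_le_card hsub4
    have hcarderase1 : (U.erase D.root).card = U.card - 1 := Finset.card_erase_of_mem hrU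
    have hcardW : W.card = U.card - 2 := by
      rw [hWdef, Finset.card_erase_of_mem hW_r, Finset.card_erase_of_mem hxU]
      omega
    have hcard2 : 2 ≤ U.card :=
      Finset.one_lt_card.mpr ⟨x, hxU, D.root, hrU, hxr⟩
    have hlower : U.card * 2 ≤ ∑ u ∈ U, G.degree u :=
      Finset.card_nsmul_le_sum U _ 2 (fun u _ => hdeg u)
    omega

end Coverage

section BackwardTop

set_option linter.unusedSectionVars false

variable {G : SimpleGraph V} (D : SchmidtDFS G)

lemma backward_dir [DecidableRel G.Adj] (hcard : 3 ≤ Fintype.card V)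
    (hmindeg : 2 ≤ G.minDegree)
    (hstruct : ∃ c cs, D.chains = c :: cs ∧ IsCycleChain c ∧ ∀ c' ∈ cs, ¬ IsCycleChain c') :
    ∀ v : V, (SimpleGraph.induce {u : V | u ≠ v} G).Connected := by
  have hdeg : ∀ v, 2 ≤ G.degree v := fun v => le_trans hmindeg (G.minDegree_le_degree v)
  obtain ⟨c, cs, hchains, hcyc, hncs⟩ := hstruct
  cases hBE : D.backEdges with
  | nil =>
      rw [SchmidtDFS.chains, hBE] at hchains
      simp [runChains] at hchains
  | cons e rest =>
      obtain ⟨v₁, w₁⟩ := e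
      have hvw : (v₁, w₁) ∈ D.backEdges := by rw [hBE]; exact List.mem_cons_self
      obtain ⟨hadj, -, k, hk2, hkv⟩ := D.backEdges_spec _ hvw
      have hadj : G.Adj v₁ w₁ := hadj
      have hkv : D.parent^[k] w₁ = v₁ := hkv
      obtain ⟨m, hmk, hrep, hstop, hmin⟩ := chain_struct D ∅ v₁ w₁ k (by omega) hkv
      have hpair := List.pairwise_cons.mp (by rw [← hBE]; exact D.backEdges_sorted)
      rw [SchmidtDFS.chains, hBE, runChains_cons] at hchains
      set L := v₁ :: towardRoot D.parent D.root (insert v₁ ∅) (Fintype.card V) w₁ with hL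
      have hmemL : ∀ a, a ∈ L ↔ a = v₁ ∨ ∃ t, t ≤ m ∧ a = D.parent^[t] w₁ := by
        intro a
        rw [hL, hrep]
        exact chain_mem D v₁ w₁ m a
      have hstopv : D.parent^[m] w₁ = v₁ := by
        rcases Finset.mem_insert.mp hstop with h | h
        · exact h
        · simp at h
      injection hchains with h1 h2
      rw [← h2] at hncs
      set vis₁ : Finset V := ∅ ∪ L.toFinset with hvis₁
      have hmemvis : ∀ a, a ∈ vis₁ ↔ a ∈ L := by
        intro a
        rw [hvis₁, Finset.empty_union, List.mem_toFinset]
      have hnroot : ∀ j < m, D.parent^[j] w₁ ≠ D.root := by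
        intro j hj hc
        exact hmin j hj (Or.inr hc)
      have hnv₁ : ∀ j < m, D.parent^[j] w₁ ≠ v₁ := by
        intro j hj hc
        exact hmin j hj (Or.inl (by rw [hc]; exact Finset.mem_insert_self _ _))
      have hseg : ∀ i, i + 1 ≤ m → G.Adj (D.parent^[i] w₁) (D.parent^[i+1] w₁) := by
        intro i hi
        rw [Function.iterate_succ_apply']
        exact D.parent_adj _ (hnroot i (by omega))
      have hinj : ∀ t t', t ≤ t' → t' ≤ m → D.parent^[t] w₁ = D.parent^[t'] w₁ → t = t' :=
        path_inj D hnroot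
      have hwrap : G.Adj (D.parent^[0] w₁) (D.parent^[m] w₁) := by
        rw [hstopv, Function.iterate_zero_apply]
        exact hadj.symm
      -- connectivity of the cycle minus any vertex
      have aux : ∀ vr t t', t ≤ t' → t' ≤ m → D.parent^[t] w₁ ≠ vr → D.parent^[t'] w₁ ≠ vr →
          Reach G vr (D.parent^[t] w₁) (D.parent^[t'] w₁) := by
        intro vr t t' htt' ht'm hav hbv
        by_cases hblock : ∃ s, t ≤ s ∧ s ≤ t' ∧ D.parent^[s] w₁ = vr
        · obtain ⟨s, hts, hst', hsvr⟩ := hblock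
          have hts : t < s := by
            rcases eq_or_lt_of_le hts with h | h
            · exact absurd (h ▸ hsvr) hav
            · exact h
          have hst' : s < t' := by
            rcases eq_or_lt_of_le hst' with h | h
            · exact absurd (h ▸ hsvr) hbv
            · exact h
          have hdown : Reach G vr (D.parent^[t] w₁) (D.parent^[0] w₁) := by
            refine reach_symm (reach_seg vr (fun i => D.parent^[i] w₁) hseg 0 t
              (by omega) (by omega) ?_)
            intro i hi0 hit hc
            rw [← hsvr] at hc
            have := hinj i s (by omega) (by omega) hc
            omega
          have hup : Reach G vr (D.parent^[m] w₁) (D.parent^[t'] w₁) := by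
            refine reach_symm (reach_seg vr (fun i => D.parent^[i] w₁) hseg t' m
              (by omega) le_rfl ?_)
            intro i hit' him hc
            rw [← hsvr] at hc
            have := hinj s i (by omega) (by omega) hc.symm
            omega
          have h0vr : D.parent^[0] w₁ ≠ vr := by
            intro hc
            rw [← hsvr] at hc
            have := hinj 0 s (by omega) (by omega) hc
            omega
          have hmvr : D.parent^[m] w₁ ≠ vr := by
            intro hc
            rw [← hsvr] at hc
            have := hinj s m (by omega) le_rfl hc.symm
            omega
          exact reach_trans (reach_trans hdown (reach_adj hwrap) h0vr) hup hmvr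
        · push_neg at hblock
          refine reach_seg vr (fun i => D.parent^[i] w₁) hseg t t' htt' ht'm ?_
          intro i hti hit'
          exact hblock i hti hit'
      have baseCON : ∀ vr a b, a ∈ vis₁ → b ∈ vis₁ → a ≠ vr → b ≠ vr → Reach G vr a b := by
        intro vr a b ha hb hav hbv
        have hrepa : ∃ t, t ≤ m ∧ a = D.parent^[t] w₁ := by
          rcases (hmemL a).mp ((hmemvis a).mp ha) with h | h
          · exact ⟨m, le_rfl, by rw [h, hstopv]⟩
          · exact h
        have hrepb : ∃ t, t ≤ m ∧ b = D.parent^[t] w₁ := by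
          rcases (hmemL b).mp ((hmemvis b).mp hb) with h | h
          · exact ⟨m, le_rfl, by rw [h, hstopv]⟩
          · exact h
        obtain ⟨t, htm, rfl⟩ := hrepa
        obtain ⟨t', ht'm, rfl⟩ := hrepb
        rcases le_total t t' with h | h
        · exact aux vr t t' h ht'm hav hbv
        · exact reach_symm (aux vr t' t h htm hbv hav)
      have hinv := backward_main D v₁ rest vis₁
        (fun e he => by rw [hBE]; exact List.mem_cons_of_mem _ he)
        (fun e he => hpair.1 e he)
        ?_ ?_ ?_ ?_ hncs baseCON
      rotate_left
      · -- hFE base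
        intro a ha
        rcases (hmemL a).mp ((hmemvis a).mp ha) with h | ⟨t, htm, rfl⟩
        · exact Or.inr h
        · rcases eq_or_lt_of_le htm with ht | ht
          · subst ht
            exact Or.inr hstopv
          · refine Or.inl ((hmemvis _).mpr ((hmemL _).mpr ?_))
            exact Or.inr ⟨t + 1, by omega, (Function.iterate_succ_apply' _ _ _).symm⟩
      · -- hD1 base
        intro a ha
        rcases (hmemL a).mp ((hmemvis a).mp ha) with h | ⟨t, htm, rfl⟩
        · exact ⟨0, by rw [Function.iterate_zero_apply, h]⟩
        · refine ⟨m - t, ?_⟩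
          rw [← Function.iterate_add_apply]
          have : m - t + t = m := by omega
          rw [this, hstopv]
      · -- v₁ ∈ vis₁
        exact (hmemvis _).mpr ((hmemL _).mpr (Or.inl rfl))
      · -- hB base
        intro e he
        rw [hBE] at he
        rcases List.mem_cons.mp he with h | h
        · refine Or.inr ?_
          rw [h]
          exact ⟨(hmemvis _).mpr ((hmemL _).mpr (Or.inl rfl)),
            (hmemvis _).mpr ((hmemL _).mpr (Or.inr ⟨0, by omega, rfl⟩))⟩
        · exact Or.inl h
      obtain ⟨hFEf, hD1f, hv₁f, hBEFf, hCONf⟩ := hinv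
      have hcov := coverage D hdeg v₁ (visList D.parent D.root rest vis₁) hFEf hD1f hv₁f hBEFf
      intro v
      rw [SimpleGraph.connected_iff]
      constructor
      · rintro ⟨a, ha⟩ ⟨b, hb⟩
        have ha' : a ≠ v := ha
        have hb' : b ≠ v := hb
        exact hCONf v a b (hcov a) (hcov b) ha' hb' ha' hb'
      · haveI : Nontrivial V := Fintype.one_lt_card_iff_nontrivial.mp (by omega)
        obtain ⟨u, hu⟩ := exists_ne v
        exact ⟨⟨u, hu⟩⟩

end BackwardTop

/-- Schmidt's criterion: a connected graph `G` with at least three vertices is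
2-vertex-connected (it has no cut vertex, i.e. removing any single vertex leaves the
graph connected) if and only if its minimum degree is at least `2` and the first chain
`D1` of a chain decomposition is the only chain that is a cycle. -/
theorem biconnected_iff_min_degree_and_unique_cycle_chain
    (G : SimpleGraph V) [DecidableRel G.Adj] (hG : G.Connected)
    (hcard : 3 ≤ Fintype.card V) (D : SchmidtDFS G) :
    (∀ v : V, (SimpleGraph.induce {u : V | u ≠ v} G).Connected) ↔
      (2 ≤ G.minDegree ∧
        ∃ c cs, D.chains = c :: cs ∧ IsCycleChain c ∧ ∀ c' ∈ cs, ¬ IsCycleChain c') := by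
  constructor
  · intro hnocut
    exact forward_dir D hG hcard hnocut
  · rintro ⟨h1, h2⟩
    exact backward_dir D hcard h1 h2
end

section
/- In Schmidt's chain decomposition of a connected undirected graph, the first chain D1 (if any back edge exists) is always a cycle. -/
variable {V : Type*} [Fintype V] [DecidableEq V]

set_option linter.unusedSectionVars false

lemma towardRoot_ne_nil (parent : V → V) (root : V) (visited : Finset V) :
    ∀ n w, towardRoot parent root visited n w ≠ [] := by
  intro n w
  cases n with
  | zero => simp [towardRoot]
  | succ n => simp only [towardRoot]; split <;> simp

lemma towardRoot_getLast (parent : V → V) (root : V) (visited : Finset V) :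
    ∀ n w, (∃ j ≤ n, parent^[j] w ∈ visited ∨ parent^[j] w = root) →
      ∃ l j, j ≤ n ∧ parent^[j] w = l ∧ (l ∈ visited ∨ l = root) ∧
        (∀ i < j, ¬(parent^[i] w ∈ visited ∨ parent^[i] w = root)) ∧
        (towardRoot parent root visited n w).getLast? = some l := by
  intro n
  induction n with
  | zero =>
    rintro w ⟨j, hj, hstop⟩
    interval_cases j
    exact ⟨w, 0, le_refl _, rfl, by simpa using hstop, by omega, by simp [towardRoot]⟩
  | succ n ih =>
    rintro w ⟨j, hj, hstop⟩
    by_cases hw : w ∈ visited ∨ w = root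
    · exact ⟨w, 0, by omega, rfl, hw, by omega, by simp [towardRoot, hw]⟩
    · have hj0 : j ≠ 0 := by rintro rfl; simp at hstop; exact hw hstop
      obtain ⟨j', rfl⟩ : ∃ j', j = j' + 1 := ⟨j - 1, by omega⟩
      have hstep : ∀ i, parent^[i] (parent w) = parent^[i+1] w := by
        intro i; rw [Function.iterate_succ_apply]
      obtain ⟨l, j2, hj2, heq, hl, hmin, hlast⟩ :=
        ih (parent w) ⟨j', by omega, by rw [hstep]; exact hstop⟩
      refine ⟨l, j2 + 1, by omega, by rw [← hstep]; exact heq, hl, ?_, ?_⟩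
      · intro i hi
        cases i with
        | zero => simpa using hw
        | succ i => rw [← hstep]; exact hmin i (by omega)
      · rw [show towardRoot parent root visited (n+1) w
            = w :: towardRoot parent root visited n (parent w) by
            simp [towardRoot, hw]]
        obtain ⟨a, t, ht⟩ := List.exists_cons_of_ne_nil (towardRoot_ne_nil parent root visited n (parent w))
        rw [ht] at hlast ⊢
        rwa [List.getLast?_cons_cons]

/-- In Schmidt's chain decomposition of a connected graph with at least one back edge,
the first chain is always a cycle. -/
theorem first_chain_is_cycle
    (G : SimpleGraph V) (hG : G.Connected) (D : SchmidtDFS G)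
    (hne : D.backEdges ≠ []) :
    ∃ c cs, D.chains = c :: cs ∧ IsCycleChain c := by
  obtain ⟨⟨v, w⟩, rest, hcons⟩ := List.exists_cons_of_ne_nil hne
  obtain ⟨hadj, hnp, k, hk2, hkv⟩ := D.backEdges_spec (v, w) (hcons ▸ List.mem_cons_self)
  simp only at hadj hnp hkv
  set parent := D.parent with hparent
  set root := D.root with hroot
  set vis : Finset V := insert v ∅ with hvis
  -- stop predicate characterization
  have hstopv : ∀ u, (u ∈ vis ∨ u = root) ↔ (u = v ∨ u = root) := by
    intro u; simp [hvis]
  -- there is a stop index: w reaches the root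
  obtain ⟨k0, hk0⟩ := D.reaches_root w
  have hex : ∃ j, parent^[j] w ∈ vis ∨ parent^[j] w = root :=
    ⟨k0, Or.inr hk0⟩
  classical
  set J := Nat.find hex with hJ
  have hJstop : parent^[J] w ∈ vis ∨ parent^[J] w = root := Nat.find_spec hex
  have hJmin : ∀ i < J, ¬(parent^[i] w ∈ vis ∨ parent^[i] w = root) :=
    fun i hi => Nat.find_min hex hi
  -- along the chain before the stop, dfi strictly decreases
  have hmono : ∀ b ≤ J, ∀ a < b, D.dfi (parent^[b] w) < D.dfi (parent^[a] w) := by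
    intro b
    induction b with
    | zero => omega
    | succ b ihb =>
      intro hb a ha
      have hbr : parent^[b] w ≠ root := fun h => hJmin b (by omega) (Or.inr h)
      have hstep : D.dfi (parent^[b+1] w) < D.dfi (parent^[b] w) := by
        rw [Function.iterate_succ_apply']
        exact D.dfi_parent _ hbr
      rcases Nat.lt_succ_iff_lt_or_eq.mp ha with h | h
      · exact hstep.trans (ihb (by omega) a h)
      · subst h; exact hstep
  -- hence the first J+1 vertices are distinct, so J < card V
  have hinj : Function.Injective (fun i : Fin (J + 1) => parent^[(i : ℕ)] w) := by
    intro a b hab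
    by_contra hne'
    rcases lt_or_gt_of_ne (fun h : (a:ℕ) = (b:ℕ) => hne' (Fin.ext h)) with h | h
    · exact absurd (congrArg D.dfi hab).symm
        (ne_of_lt (hmono b (by omega) a h))
    · exact absurd (congrArg D.dfi hab)
        (ne_of_lt (hmono a (by omega) b h))
  have hJcard : J + 1 ≤ Fintype.card V := by
    simpa using Fintype.card_le_of_injective _ hinj
  -- apply the getLast lemma
  obtain ⟨l, j, hjle, hjeq, hl, hmin, hlast⟩ :=
    towardRoot_getLast parent root vis (Fintype.card V) w ⟨J, by omega, hJstop⟩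
  -- the stop vertex is v
  have hlv : l = v := by
    rcases (hstopv l).mp hl with h | h
    · exact h
    · -- l = root; show v = root too
      have hkj : j ≤ k := by
        by_contra hlt
        exact hmin k (by omega) ((hstopv _).mpr (Or.inl hkv))
      have : parent^[k] w = parent^[k - j] (parent^[j] w) := by
        rw [← Function.iterate_add_apply]
        congr 1; omega
      rw [hjeq, h] at this
      have hrfix : parent^[k - j] root = root :=
        Function.iterate_fixed D.parent_root _
      rw [hrfix] at this
      rw [← hkv, this, ← h]
  -- assemble
  refine ⟨v :: towardRoot parent root vis (Fintype.card V) w,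
    runChains parent root rest
      (∅ ∪ (v :: towardRoot parent root vis (Fintype.card V) w).toFinset), ?_, ?_, ?_⟩
  · rw [SchmidtDFS.chains, hcons]; rfl
  · have := towardRoot_ne_nil parent root vis (Fintype.card V) w
    cases h : towardRoot parent root vis (Fintype.card V) w with
    | nil => exact absurd h this
    | cons a t => simp
  · rw [List.head?_cons]
    obtain ⟨a, t, ht⟩ := List.exists_cons_of_ne_nil
      (towardRoot_ne_nil parent root vis (Fintype.card V) w)
    rw [ht] at hlast ⊢
    rw [List.getLast?_cons_cons, hlast, hlv]
end
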